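/- Let Z^{n-1} ⊂ P^{2n} be the scheme defined by u₀ = 0, u_{2i+1}² + 3u_{2i+2}² = 0 for i = 0,…,n-1, u_{2s+1}u_{2t+3} + 3u_{2s+2}u_{2t+4} = 0 and u_{2s+2}u_{2t+3} - u_{2s+1}u_{2t+4} = 0 for 0 ≤ s ≤ t ≤ n-2. Then over any field containing ξ with ξ² = -3, Z^{n-1} is the disjoint union of the two (n-1)-planes Z₊ = {u₀ = 0, u_{2i+1} + ξu_{2i+2} = 0, i = 0,…,n-1} and Z₋ = {u₀ = 0, u_{2i+1} - ξu_{2i+2} = 0, i = 0,…,n-1}; in particular Z^{n-1} is smooth of dimension n-1 and degree 2. -/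
import Mathlib


def oddVar (n : ℕ) (i : Fin n) : Fin (2 * n + 1) := ⟨2 * i.1 + 1, by have := i.2; omega⟩
def evenVar (n : ℕ) (i : Fin n) : Fin (2 * n + 1) := ⟨2 * i.1 + 2, by have := i.2; omega⟩
def sVar1 (n : ℕ) (s : Fin (n - 1)) : Fin (2 * n + 1) := ⟨2 * s.1 + 1, by have := s.2; omega⟩
def sVar2 (n : ℕ) (s : Fin (n - 1)) : Fin (2 * n + 1) := ⟨2 * s.1 + 2, by have := s.2; omega⟩
def tVar3 (n : ℕ) (t : Fin (n - 1)) : Fin (2 * n + 1) := ⟨2 * t.1 + 3, by have := t.2; omega⟩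
def tVar4 (n : ℕ) (t : Fin (n - 1)) : Fin (2 * n + 1) := ⟨2 * t.1 + 4, by have := t.2; omega⟩

/-- The affine cone over the scheme `Z^{n-1} ⊂ P^{2n}` defined by `u₀ = 0`,
`u_{2i+1}² + 3u_{2i+2}² = 0` for `i = 0, …, n-1`, and
`u_{2s+1}u_{2t+3} + 3u_{2s+2}u_{2t+4} = 0`, `u_{2s+2}u_{2t+3} - u_{2s+1}u_{2t+4} = 0`
for `0 ≤ s ≤ t ≤ n-2`. -/
def Zcone (k : Type) [Field k] (n : ℕ) : Set (Fin (2 * n + 1) → k) :=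
  {u | u ⟨0, by omega⟩ = 0 ∧
    (∀ i : Fin n, u (oddVar n i) ^ 2 + 3 * u (evenVar n i) ^ 2 = 0) ∧
    ∀ s t : Fin (n - 1), s.1 ≤ t.1 →
      u (sVar1 n s) * u (tVar3 n t) + 3 * u (sVar2 n s) * u (tVar4 n t) = 0 ∧
      u (sVar2 n s) * u (tVar3 n t) - u (sVar1 n s) * u (tVar4 n t) = 0}

/-- The affine cone over the `(n-1)`-plane `{u₀ = 0, u_{2i+1} + ξ·u_{2i+2} = 0}`. -/
noncomputable def planeCone (k : Type) [Field k] (n : ℕ) (ξ : k) :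
    Submodule k (Fin (2 * n + 1) → k) :=
  LinearMap.ker ((LinearMap.pi (Fin.cons
    (LinearMap.proj (⟨0, by omega⟩ : Fin (2 * n + 1)))
    (fun j : Fin n => LinearMap.proj (oddVar n j) + ξ • LinearMap.proj (evenVar n j)) :
      Fin (n + 1) → (Fin (2 * n + 1) → k) →ₗ[k] k)) :
    (Fin (2 * n + 1) → k) →ₗ[k] (Fin (n + 1) → k))

lemma mem_planeCone {k : Type} [Field k] {n : ℕ} {ξ : k} {u : Fin (2 * n + 1) → k} :
    u ∈ planeCone k n ξ ↔
      u ⟨0, by omega⟩ = 0 ∧ ∀ j : Fin n, u (oddVar n j) + ξ * u (evenVar n j) = 0 := by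
  simp only [planeCone, LinearMap.mem_ker, funext_iff, Fin.forall_fin_succ,
    LinearMap.pi_apply, Fin.cons_zero, Fin.cons_succ, LinearMap.add_apply,
    LinearMap.smul_apply, LinearMap.proj_apply, Pi.zero_apply, smul_eq_mul]

lemma plane_subset_Zcone {k : Type} [Field k] {n : ℕ} {η : k} (hη : η ^ 2 = -3) :
    (planeCone k n η : Set (Fin (2 * n + 1) → k)) ⊆ Zcone k n := by
  intro u hu
  rw [SetLike.mem_coe, mem_planeCone] at hu
  obtain ⟨h0, hp⟩ := hu
  refine ⟨h0, fun i => ?_, fun s t hst => ?_⟩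
  · linear_combination (u (oddVar n i) - η * u (evenVar n i)) * hp i
      + u (evenVar n i) ^ 2 * hη
  · have hs : u (sVar1 n s) + η * u (sVar2 n s) = 0 := hp ⟨s.1, by have := s.2; omega⟩
    have ht : u (tVar3 n t) + η * u (tVar4 n t) = 0 := by
      have h := hp ⟨t.1 + 1, by have := t.2; omega⟩
      have e3 : oddVar n ⟨t.1 + 1, by have := t.2; omega⟩ = tVar3 n t :=
        Fin.ext (by simp [oddVar, tVar3]; omega)
      have e4 : evenVar n ⟨t.1 + 1, by have := t.2; omega⟩ = tVar4 n t :=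
        Fin.ext (by simp [evenVar, tVar4]; omega)
      rwa [e3, e4] at h
    constructor
    · linear_combination u (tVar3 n t) * hs - η * u (sVar2 n s) * ht
        + u (sVar2 n s) * u (tVar4 n t) * hη
    · linear_combination u (sVar2 n s) * ht - u (tVar4 n t) * hs

lemma finrank_planeCone {k : Type} [Field k] {n : ℕ} (η : k) :
    Module.finrank k (planeCone k n η) = n := by
  set L := ((LinearMap.pi (Fin.cons
    (LinearMap.proj (⟨0, by omega⟩ : Fin (2 * n + 1)))
    (fun j : Fin n => LinearMap.proj (oddVar n j) + η • LinearMap.proj (evenVar n j)) :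
      Fin (n + 1) → (Fin (2 * n + 1) → k) →ₗ[k] k)) :
    (Fin (2 * n + 1) → k) →ₗ[k] (Fin (n + 1) → k)) with hL
  have hsurj : Function.Surjective L := by
    intro v
    refine ⟨fun x => if h : x.1 % 2 = 1 then v ⟨x.1 / 2 + 1, by have := x.2; omega⟩
      else if x.1 = 0 then v 0 else 0, ?_⟩
    funext i
    induction i using Fin.cases with
    | zero =>
      simp only [hL, LinearMap.pi_apply, Fin.cons_zero, LinearMap.proj_apply]
      norm_num
    | succ j =>
      simp only [hL, LinearMap.pi_apply, Fin.cons_succ, LinearMap.add_apply,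
        LinearMap.smul_apply, LinearMap.proj_apply, smul_eq_mul, oddVar, evenVar]
      rw [dif_pos (by omega), dif_neg (by omega), if_neg (by omega)]
      have : (⟨(2 * j.1 + 1) / 2 + 1, by have := j.2; omega⟩ : Fin (n + 1)) = j.succ := by
        apply Fin.ext; simp [Fin.val_succ]; omega
      rw [this]; ring
  have hrank := LinearMap.finrank_range_add_finrank_ker L
  rw [LinearMap.range_eq_top.mpr hsurj, finrank_top] at hrank
  have h1 : Module.finrank k (Fin (n + 1) → k) = n + 1 := Module.finrank_fin_fun k
  have h2 : Module.finrank k (Fin (2 * n + 1) → k) = 2 * n + 1 := Module.finrank_fin_fun k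
  have : Module.finrank k (planeCone k n η) = Module.finrank k (LinearMap.ker L) := rfl
  rw [this]
  omega

/-- Over any field `k` (of characteristic `≠ 2, 3`) containing `ξ` with
`ξ² = -3`, the scheme `Z^{n-1} ⊂ P^{2n}` is the disjoint union of the two `(n-1)`-planes
`Z₊ = {u₀ = 0, u_{2i+1} + ξu_{2i+2} = 0}` and `Z₋ = {u₀ = 0, u_{2i+1} - ξu_{2i+2} = 0}`;
in particular `Z^{n-1}` is smooth of dimension `n-1` and degree `2`. In terms of affine
cones: the cone of `Z^{n-1}` is the union of the two `n`-dimensional linear subspaces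
`Z₊, Z₋` of `k^{2n+1}`, which meet only at the origin. -/
theorem Z_decomposition (k : Type) [Field k] (h2 : (2 : k) ≠ 0) (h3 : (3 : k) ≠ 0)
    (ξ : k) (hξ : ξ ^ 2 = -3) (n : ℕ) (hn : 1 ≤ n) :
    Zcone k n = (planeCone k n ξ : Set (Fin (2 * n + 1) → k)) ∪ planeCone k n (-ξ) ∧
    planeCone k n ξ ⊓ planeCone k n (-ξ) = ⊥ ∧
    Module.finrank k (planeCone k n ξ) = n ∧
    Module.finrank k (planeCone k n (-ξ)) = n := by
  have hξ' : (-ξ) ^ 2 = -3 := by rw [neg_pow]; simp [hξ]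
  have hξ0 : ξ ≠ 0 := by
    intro h; rw [h] at hξ
    exact h3 (by linear_combination hξ)
  refine ⟨?_, ?_, finrank_planeCone ξ, finrank_planeCone (-ξ)⟩
  · apply Set.eq_of_subset_of_subset
    · intro u hu
      obtain ⟨h0, hq, hc⟩ := hu
      by_cases hall : ∀ j : Fin n, u (oddVar n j) + ξ * u (evenVar n j) = 0
      · exact Or.inl (by rw [SetLike.mem_coe, mem_planeCone]; exact ⟨h0, hall⟩)
      · push_neg at hall
        obtain ⟨j₀, hj₀⟩ := hall
        right
        rw [SetLike.mem_coe, mem_planeCone]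
        refine ⟨h0, fun j => ?_⟩
        by_contra hj
        -- both j₀ and j are "bad" in opposite ways
        have hfac : ∀ i : Fin n, (u (oddVar n i) + ξ * u (evenVar n i)) *
            (u (oddVar n i) - ξ * u (evenVar n i)) = 0 := fun i => by
          linear_combination hq i - u (evenVar n i) ^ 2 * hξ
        have hj₀m : u (oddVar n j₀) - ξ * u (evenVar n j₀) = 0 := by
          rcases mul_eq_zero.mp (hfac j₀) with h | h
          · exact absurd h hj₀
          · exact h
        have hjp : u (oddVar n j) + ξ * u (evenVar n j) = 0 := by
          have hj' : u (oddVar n j) + (-ξ) * u (evenVar n j) ≠ 0 := hj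
          rcases mul_eq_zero.mp (hfac j) with h | h
          · exact h
          · exact absurd (by linear_combination h) hj'
        have hb₀ : u (evenVar n j₀) ≠ 0 := by
          intro h
          apply hj₀
          have := hj₀m
          rw [h] at this ⊢
          linear_combination this
        have hbj : u (evenVar n j) ≠ 0 := by
          intro h
          apply hj
          rw [h] at hjp ⊢
          linear_combination hjp
        have hne : j.1 ≠ j₀.1 := by
          intro h
          have : j = j₀ := Fin.ext h
          subst this
          exact hj₀ hjp
        have h6 : (6 : k) ≠ 0 := by
          intro h
          exact mul_ne_zero h2 h3 (by linear_combination h)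
        rcases Nat.lt_or_ge j.1 j₀.1 with hlt | hge
        · -- s = j (plus-plane: a = -ξb), t = j₀ - 1 (minus-plane: c = ξd)
          have hs : j.1 < n - 1 := by have := j₀.2; omega
          have ht : j₀.1 - 1 < n - 1 := by have := j₀.2; omega
          obtain ⟨hrel, -⟩ := hc ⟨j.1, hs⟩ ⟨j₀.1 - 1, ht⟩ (by simp; omega)
          have e1 : sVar1 n ⟨j.1, hs⟩ = oddVar n j := rfl
          have e2 : sVar2 n ⟨j.1, hs⟩ = evenVar n j := rfl
          have e3 : tVar3 n ⟨j₀.1 - 1, ht⟩ = oddVar n j₀ := by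
            apply Fin.ext; simp [tVar3, oddVar]; omega
          have e4 : tVar4 n ⟨j₀.1 - 1, ht⟩ = evenVar n j₀ := by
            apply Fin.ext; simp [tVar4, evenVar]; omega
          rw [e1, e2, e3, e4] at hrel
          -- a = -ξ b, c = ξ d  ⇒ ac + 3bd = -ξ² bd + 3bd = 6bd
          have : (6 : k) * (u (evenVar n j) * u (evenVar n j₀)) = 0 := by
            linear_combination hrel - u (oddVar n j₀) * hjp + (ξ * u (evenVar n j)) * hj₀m
              + u (evenVar n j) * u (evenVar n j₀) * hξ
          rcases mul_eq_zero.mp this with h | h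
          · exact h6 h
          · rcases mul_eq_zero.mp h with h | h
            exacts [hbj h, hb₀ h]
        · -- s = j₀ (minus-plane: a = ξb), t = j - 1 (plus-plane: c = -ξd)
          have hlt : j₀.1 < j.1 := by omega
          have hs : j₀.1 < n - 1 := by have := j.2; omega
          have ht : j.1 - 1 < n - 1 := by have := j.2; omega
          obtain ⟨hrel, -⟩ := hc ⟨j₀.1, hs⟩ ⟨j.1 - 1, ht⟩ (by simp; omega)
          have e1 : sVar1 n ⟨j₀.1, hs⟩ = oddVar n j₀ := rfl
          have e2 : sVar2 n ⟨j₀.1, hs⟩ = evenVar n j₀ := rfl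
          have e3 : tVar3 n ⟨j.1 - 1, ht⟩ = oddVar n j := by
            apply Fin.ext; simp [tVar3, oddVar]; omega
          have e4 : tVar4 n ⟨j.1 - 1, ht⟩ = evenVar n j := by
            apply Fin.ext; simp [tVar4, evenVar]; omega
          rw [e1, e2, e3, e4] at hrel
          have : (6 : k) * (u (evenVar n j₀) * u (evenVar n j)) = 0 := by
            linear_combination hrel - u (oddVar n j) * hj₀m - (ξ * u (evenVar n j₀)) * hjp
              + u (evenVar n j₀) * u (evenVar n j) * hξ
          rcases mul_eq_zero.mp this with h | h
          · exact h6 h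
          · rcases mul_eq_zero.mp h with h | h
            exacts [hb₀ h, hbj h]
    · intro u hu
      rcases hu with hu | hu
      · exact plane_subset_Zcone hξ hu
      · exact plane_subset_Zcone hξ' hu
  · apply le_antisymm _ bot_le
    intro u hu
    rw [Submodule.mem_inf] at hu
    obtain ⟨hp, hm⟩ := hu
    rw [mem_planeCone] at hp hm
    obtain ⟨h0, hp⟩ := hp
    obtain ⟨-, hm⟩ := hm
    have hb : ∀ j : Fin n, u (evenVar n j) = 0 := by
      intro j
      have h := sub_eq_zero.mpr (congrArg id (rfl : u (oddVar n j) = u (oddVar n j)))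
      have : (2 * ξ) * u (evenVar n j) = 0 := by
        linear_combination hp j - hm j
      rcases mul_eq_zero.mp this with h' | h'
      · exact absurd h' (mul_ne_zero h2 hξ0)
      · exact h'
    have ha : ∀ j : Fin n, u (oddVar n j) = 0 := by
      intro j
      have := hp j
      rw [hb j] at this
      linear_combination this
    rw [Submodule.mem_bot]
    funext x
    simp only [Pi.zero_apply]
    obtain ⟨m, hm'⟩ := x
    rcases Nat.lt_or_ge 0 m with hpos | hz
    · rcases Nat.even_or_odd m with he | ho
      · rw [Nat.even_iff] at he
        have hc : (m - 2) / 2 < n := by omega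
        have : (⟨m, hm'⟩ : Fin (2 * n + 1)) = evenVar n ⟨(m - 2) / 2, hc⟩ := by
          apply Fin.ext; simp [evenVar]; omega
        rw [this]; exact hb _
      · rw [Nat.odd_iff] at ho
        have hc : (m - 1) / 2 < n := by omega
        have : (⟨m, hm'⟩ : Fin (2 * n + 1)) = oddVar n ⟨(m - 1) / 2, hc⟩ := by
          apply Fin.ext; simp [oddVar]; omega
        rw [this]; exact ha _
    · have hm0 : m = 0 := by omega
      subst hm0
      exact h0
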